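/- arXiv:2205.15486 — 2 statements merged into one kernel-verified Lean document; each statement's English description precedes it below -/
import Mathlib

section
/- Let C be a category possessing a terminal object. Then the groupoid reflection of C — the localization of C obtained by formally inverting every morphism of C (the localization of C at the morphism property consisting of all morphisms) — is a contractible groupoid, i.e., it is equivalent to the terminal category (the category with one object and only its identity morphism). -/
open CategoryTheory

/-- The groupoid reflection of a category with a terminal object, i.e. its
localization at the class of all morphisms, is a contractible groupoid: it is
equivalent to the terminal category. -/
theorem groupoidReflection_contractible_of_terminal {C : Type*} [Category C]
    [Limits.HasTerminal C] :
    Nonempty ((⊤ : MorphismProperty C).Localization ≌ Discrete PUnit) := by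
  set W : MorphismProperty C := ⊤ with hW
  let Q := W.Q
  have hinv : W.IsInvertedBy (Functor.star C) := fun X Y f _ => inferInstance
  let F : W.Localization ⥤ Discrete PUnit := Localization.lift (Functor.star C) hinv Q
  let G : Discrete PUnit ⥤ W.Localization := Functor.fromPUnit (Q.obj (⊤_ C))
  have e : (Q ⋙ (F ⋙ G)) ≅ Q := NatIso.ofComponents
    (fun X => (Localization.isoOfHom Q W (Limits.terminal.from X) trivial).symm)
    (fun {X Y} f => by
      dsimp [G]
      rw [Category.id_comp, Iso.eq_inv_comp, Iso.comp_inv_eq,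
        Localization.isoOfHom_hom, Localization.isoOfHom_hom, ← Q.map_comp,
        Subsingleton.elim (Limits.terminal.from X)
          (f ≫ Limits.terminal.from Y)])
  haveI : Localization.Lifting Q W (Q ⋙ (F ⋙ G)) (F ⋙ G) := ⟨Iso.refl _⟩
  haveI : Localization.Lifting Q W Q (𝟭 _) := ⟨Q.rightUnitor⟩
  have unitIso : (F ⋙ G) ≅ 𝟭 W.Localization :=
    Localization.liftNatIso Q W (Q ⋙ (F ⋙ G)) Q (F ⋙ G) (𝟭 _) e
  have counitIso : (G ⋙ F) ≅ 𝟭 (Discrete PUnit) := NatIso.ofComponents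
    (fun X => eqToIso (by apply Subsingleton.elim)) (fun f => Subsingleton.elim _ _)
  exact ⟨CategoryTheory.Equivalence.mk F G unitIso.symm counitIso⟩
end

section
/- Let α be a type equipped with a strict partial order ≺ (irreflexive, transitive, hence asymmetric). Define a rewrite relation → on lists over α by: l → l' if and only if there exist lists u, v and elements a, b ∈ α with b ≺ a such that l = u ++ [a, b] ++ v and l' = u ++ [b, a] ++ v. Call a list a normal form if it admits no rewrite, i.e., it contains no adjacent pair of entries a followed by b with b ≺ a. Then every list l reduces to a unique normal form: there exists exactly one normal form n with l →* n, where →* denotes the reflexive-transitive closure of →. -/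
/-- The adjacent-swap rewrite relation on lists over `α` induced by a relation
`r`: `l` rewrites to `l'` iff `l = u ++ [a, b] ++ v` and `l' = u ++ [b, a] ++ v`
for some `u, v, a, b` with `b ≺ a` (here `r b a`). -/
def SwapStep {α : Type*} (r : α → α → Prop) (l l' : List α) : Prop :=
  ∃ (u v : List α) (a b : α), r b a ∧ l = u ++ [a, b] ++ v ∧ l' = u ++ [b, a] ++ v

/-- A list is a normal form if no adjacent-swap rewrite applies to it. -/
def IsNormalForm {α : Type*} (r : α → α → Prop) (l : List α) : Prop :=
  ∀ l' : List α, ¬ SwapStep r l l'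

namespace SwapAux

attribute [local instance] Classical.propDecidable

variable {α : Type*} (r : α → α → Prop)

/-- Inductive (structural) version of the adjacent-swap step. -/
inductive Step : List α → List α → Prop
  | head (a b : α) (v : List α) : r b a → Step (a :: b :: v) (b :: a :: v)
  | cons (c : α) {l l' : List α} : Step l l' → Step (c :: l) (c :: l')

variable {r}

lemma swapStep_iff_step {l l' : List α} : SwapStep r l l' ↔ Step r l l' := by
  constructor
  · rintro ⟨u, v, a, b, hr, rfl, rfl⟩
    induction u with
    | nil => exact Step.head a b v hr
    | cons c u ih => exact Step.cons c ih
  · intro h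
    induction h with
    | head a b v hr => exact ⟨[], v, a, b, hr, rfl, rfl⟩
    | cons c h ih =>
      obtain ⟨u, v, a, b, hr, rfl, rfl⟩ := ih
      exact ⟨c :: u, v, a, b, hr, rfl, rfl⟩

lemma Step.perm {l l' : List α} (h : Step r l l') : l'.Perm l := by
  induction h with
  | head a b v hr => exact List.Perm.swap a b v
  | cons c h ih => exact ih.cons c

/-- Number of inversions (pairs in the wrong order) of a list. -/
noncomputable def invCount (r : α → α → Prop) : List α → ℕ
  | [] => 0
  | a :: t => t.countP (fun b => decide (r b a)) + invCount r t

lemma Step.invCount_lt (hasym : ∀ a b, r a b → ¬ r b a)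
    {l l' : List α} (h : Step r l l') : invCount r l' < invCount r l := by
  induction h with
  | head a b v hr =>
    have hnab : ¬ r a b := hasym b a hr
    have h1 : (decide (r b a)) = true := decide_eq_true hr
    have h2 : (decide (r a b)) = false := decide_eq_false hnab
    simp [invCount, List.countP_cons, h1, h2]
    omega
  | cons c h ih =>
    have hcount := h.perm.countP_eq (fun b => decide (r b c))
    simp only [invCount]
    omega

lemma rtg_cons (c : α) {s t : List α}
    (h : Relation.ReflTransGen (Step r) s t) :
    Relation.ReflTransGen (Step r) (c :: s) (c :: t) :=
  Relation.ReflTransGen.lift (c :: ·) (fun _ _ h => Step.cons c h) _ _ h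

lemma local_confluence (htrans : ∀ a b c, r a b → r b c → r a c)
    {l l1 l2 : List α} (h1 : Step r l l1) (h2 : Step r l l2) :
    ∃ m, Relation.ReflTransGen (Step r) l1 m ∧
      Relation.ReflTransGen (Step r) l2 m := by
  induction h1 generalizing l2 with
  | head a b v hr =>
    cases h2 with
    | head => exact ⟨b :: a :: v, .refl, .refl⟩
    | cons _ h =>
      cases h with
      | head _ c' v' hrc =>
        have hca : r c' a := htrans _ _ _ hrc hr
        refine ⟨c' :: b :: a :: v', ?_, ?_⟩
        · exact Relation.ReflTransGen.head (Step.cons b (Step.head a c' v' hca))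
            (Relation.ReflTransGen.single (Step.head b c' (a :: v') hrc))
        · exact Relation.ReflTransGen.head (Step.head a c' (b :: v') hca)
            (Relation.ReflTransGen.single (Step.cons c' (Step.head a b v' hr)))
      | cons _ h' =>
        rename_i t'
        refine ⟨b :: a :: t', ?_, ?_⟩
        · exact Relation.ReflTransGen.single (Step.cons b (Step.cons a h'))
        · exact Relation.ReflTransGen.single (Step.head a b t' hr)
  | cons c h ih =>
    cases h2 with
    | head _ b v hr' =>
      cases h with
      | head _ c' v' hrc =>
        have hca : r c' c := htrans _ _ _ hrc hr'
        refine ⟨c' :: b :: c :: v', ?_, ?_⟩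
        · exact Relation.ReflTransGen.head (Step.head c c' (b :: v') hca)
            (Relation.ReflTransGen.single (Step.cons c' (Step.head c b v' hr')))
        · exact Relation.ReflTransGen.head (Step.cons b (Step.head c c' v' hca))
            (Relation.ReflTransGen.single (Step.head b c' (c :: v') hrc))
      | cons _ h' =>
        rename_i t'
        refine ⟨b :: c :: t', ?_, ?_⟩
        · exact Relation.ReflTransGen.single (Step.head c b t' hr')
        · exact Relation.ReflTransGen.single (Step.cons b (Step.cons c h'))
    | cons _ h' =>
      obtain ⟨m, hm1, hm2⟩ := ih h'
      exact ⟨c :: m, rtg_cons c hm1, rtg_cons c hm2⟩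

lemma confluence_aux (hasym : ∀ a b, r a b → ¬ r b a)
    (htrans : ∀ a b c, r a b → r b c → r a c) :
    ∀ (n : ℕ) (l : List α), invCount r l < n → ∀ {l1 l2 : List α},
      Relation.ReflTransGen (Step r) l l1 →
      Relation.ReflTransGen (Step r) l l2 →
      ∃ m, Relation.ReflTransGen (Step r) l1 m ∧
        Relation.ReflTransGen (Step r) l2 m := by
  intro n
  induction n with
  | zero => intro l h; exact absurd h (Nat.not_lt_zero _)
  | succ n ih =>
    intro l hl l1 l2 h1 h2
    rcases h1.cases_head with rfl | ⟨b1, hb1, hb⟩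
    · exact ⟨l2, h2, .refl⟩
    rcases h2.cases_head with rfl | ⟨c1, hc1, hc⟩
    · exact ⟨l1, .refl, Relation.ReflTransGen.head hb1 hb⟩
    obtain ⟨d, hd1, hd2⟩ := local_confluence htrans hb1 hc1
    have hlb1 : invCount r b1 < n :=
      lt_of_lt_of_le (hb1.invCount_lt hasym) (Nat.lt_succ_iff.mp hl)
    obtain ⟨e, he1, he2⟩ := ih b1 hlb1 hb hd1
    have hlc1 : invCount r c1 < n :=
      lt_of_lt_of_le (hc1.invCount_lt hasym) (Nat.lt_succ_iff.mp hl)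
    obtain ⟨f, hf1, hf2⟩ := ih c1 hlc1 (hd2.trans he2) hc
    exact ⟨f, he1.trans hf1, hf2⟩

lemma exists_nf_aux (hasym : ∀ a b, r a b → ¬ r b a) :
    ∀ (n : ℕ) (l : List α), invCount r l < n →
      ∃ nf, IsNormalForm r nf ∧ Relation.ReflTransGen (Step r) l nf := by
  intro n
  induction n with
  | zero => intro l h; exact absurd h (Nat.not_lt_zero _)
  | succ n ih =>
    intro l hl
    by_cases h : IsNormalForm r l
    · exact ⟨l, h, .refl⟩
    · simp only [IsNormalForm, not_forall, not_not] at h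
      obtain ⟨l', hl'⟩ := h
      have hs : Step r l l' := swapStep_iff_step.mp hl'
      obtain ⟨nf, hnf, hr⟩ := ih l'
        (lt_of_lt_of_le (hs.invCount_lt hasym) (Nat.lt_succ_iff.mp hl))
      exact ⟨nf, hnf, Relation.ReflTransGen.head hs hr⟩

lemma normal_rtg_eq {n m : List α} (hn : IsNormalForm r n)
    (h : Relation.ReflTransGen (Step r) n m) : m = n := by
  rcases h.cases_head with rfl | ⟨b, hb, _⟩
  · rfl
  · exact absurd (swapStep_iff_step.mpr hb) (hn b)

end SwapAux

/-- If `≺` is a strict partial order (irreflexive and transitive, hence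
asymmetric), every list reduces under the adjacent-swap rewrite relation to a
unique normal form. -/
theorem swapStep_unique_normal_form {α : Type*} (r : α → α → Prop)
    (hirr : ∀ a, ¬ r a a)
    (htrans : ∀ a b c, r a b → r b c → r a c) :
    ∀ l : List α, ∃! n : List α,
      IsNormalForm r n ∧ Relation.ReflTransGen (SwapStep r) l n := by
  intro l
  have hasym : ∀ a b, r a b → ¬ r b a := fun a b hab hba =>
    hirr a (htrans a b a hab hba)
  obtain ⟨nf, hnf, hr⟩ :=
    SwapAux.exists_nf_aux hasym (SwapAux.invCount r l + 1) l (Nat.lt_succ_self _)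
  refine ⟨nf, ⟨hnf, ?_⟩, ?_⟩
  · exact Relation.ReflTransGen.mono (fun _ _ => SwapAux.swapStep_iff_step.mpr) _ _ hr
  · rintro y ⟨hny, hy⟩
    have hy' : Relation.ReflTransGen (SwapAux.Step r) l y :=
      Relation.ReflTransGen.mono (fun _ _ => SwapAux.swapStep_iff_step.mp) _ _ hy
    obtain ⟨m, hm1, hm2⟩ :=
      SwapAux.confluence_aux hasym htrans (SwapAux.invCount r l + 1) l
        (Nat.lt_succ_self _) hy' hr
    have h1 := SwapAux.normal_rtg_eq hny hm1
    have h2 := SwapAux.normal_rtg_eq hnf hm2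
    rw [← h1, h2]
end
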